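/- Let v ≠ w be nonadjacent, unlooped twin vertices of a weighted marked graph G (having the same neighbors outside {v,w}), both marked u. Then [G] = [(G−w)'], where (G−w)' is G−w with the weights of v changed to α'(v) = α(v)α(w)d + α(v)β(w) + β(v)α(w) and β'(v) = β(v)β(w). -/

import Mathlib

/-- The six vertex marks of a multiply marked graph. -/
inductive Mark : Type
  | un | r | c | cr | u | ur
deriving DecidableEq

/-- A (multiply marked) graph: symmetric irreflexive adjacency, loops,
marks, and a number of free loops. -/
structure MGraph (V : Type) [DecidableEq V] : Type where
  adj : V → V → Bool
  adj_symm : ∀ x y, adj x y = adj y x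
  adj_irrefl : ∀ x, adj x x = false
  loop : V → Bool
  mark : V → Mark
  freeLoops : ℕ

namespace MGraph

variable {V : Type} [DecidableEq V]

/-- The mark change at `v` itself: unmarked↔u, r↔ur, c↔cr. -/
def flipV : Mark → Mark
  | .un => .u | .u => .un | .r => .ur | .ur => .r | .c => .cr | .cr => .c

/-- The mark change at neighbors of `v`: unmarked↔r, c↔ur, u↔cr. -/
def flipN : Mark → Mark
  | .un => .r | .r => .un | .c => .ur | .ur => .c | .u => .cr | .cr => .u

/-- The marked local complement `G_cru^v`. -/
def mlc (G : MGraph V) (v : V) : MGraph V where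
  adj x y := if x ≠ y ∧ G.adj v x = true ∧ G.adj v y = true then !(G.adj x y) else G.adj x y
  adj_symm := by
    intro x y
    try dsimp only
    by_cases h : x ≠ y ∧ G.adj v x = true ∧ G.adj v y = true
    · rw [if_pos h, if_pos ⟨h.1.symm, h.2.2, h.2.1⟩, G.adj_symm]
    · rw [if_neg h, if_neg (fun h' => h ⟨h'.1.symm, h'.2.2, h'.2.1⟩), G.adj_symm]
  adj_irrefl := by
    intro x
    try dsimp only
    rw [if_neg (fun h => h.1 rfl), G.adj_irrefl]
  loop := G.loop
  mark x := if x = v then flipV (G.mark x)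
            else if G.adj v x = true then flipN (G.mark x) else G.mark x
  freeLoops := G.freeLoops

end MGraph

/-- Whether a mark contains the letter `r`. -/
def Mark.hasR : Mark → Bool
  | .r => true | .cr => true | .ur => true | _ => false

/-- Whether a mark is `c` or `cr`. -/
def Mark.isC : Mark → Bool
  | .c => true | .cr => true | _ => false

/-- Whether a mark is `u` or `ur`. -/
def Mark.isU : Mark → Bool
  | .u => true | .ur => true | _ => false

/-- GF(2)-nullity of a square matrix. -/
noncomputable def nullity {n : Type} [Fintype n] (M : Matrix n n (ZMod 2)) : ℕ :=
  Fintype.card n - M.rank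

namespace MGraph

variable {V : Type} [DecidableEq V]

/-- The matrix `𝒜(G) + Δ_T` over GF(2): off-diagonal entries record adjacency,
and the diagonal entry at `x` is the loop contribution plus the `Δ_T` entry,
which is `1` iff (`x ∈ T` and the mark of `x` has no `r`) or (`x ∉ T` and it has an `r`). -/
def matT (G : MGraph V) (T : Finset V) : Matrix V V (ZMod 2) :=
  Matrix.of fun x y =>
    if x = y then
      (if G.loop x = true then 1 else 0) +
        (if ((x ∈ T) ↔ (G.mark x).hasR = false) then 1 else 0)
    else if G.adj x y = true then 1 else 0

/-- The vertices whose rows and columns are kept in `𝒜(G)_T`: delete `x` iff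
`x` is marked `c`/`cr` with diagonal entry `0`, or marked `u`/`ur` with diagonal entry `1`. -/
def keep (G : MGraph V) (T : Finset V) (x : V) : Bool :=
  !(((G.mark x).isC && decide (G.matT T x x = 0)) ||
    ((G.mark x).isU && decide (G.matT T x x = 1)))

/-- The matrix `𝒜(G)_T`, the submatrix of `𝒜(G) + Δ_T` on the kept vertices. -/
def subMat (G : MGraph V) (T : Finset V) :
    Matrix {x : V // G.keep T x = true} {x : V // G.keep T x = true} (ZMod 2) :=
  (G.matT T).submatrix Subtype.val Subtype.val

/-- The marked-graph bracket polynomial, evaluated at elements `A`, `B`, `d`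
of a commutative ring. -/
noncomputable def bracket (G : MGraph V) [Fintype V] {R : Type*} [CommRing R]
    (A B d : R) : R :=
  d ^ G.freeLoops *
    ∑ T : Finset V, A ^ (Fintype.card V - T.card) * B ^ T.card * d ^ nullity (G.subMat T)

/-- The weighted marked-graph bracket polynomial with vertex weights `α`, `β`. -/
noncomputable def wbracket (G : MGraph V) [Fintype V] {R : Type*} [CommRing R]
    (d : R) (α β : V → R) : R :=
  d ^ G.freeLoops *
    ∑ T : Finset V, (∏ x ∈ Tᶜ, α x) * (∏ x ∈ T, β x) * d ^ nullity (G.subMat T)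

/-- Deletion of the vertex `v`. -/
def delete (G : MGraph V) (v : V) : MGraph {x : V // x ≠ v} where
  adj x y := G.adj x.val y.val
  adj_symm := fun x y => G.adj_symm x.val y.val
  adj_irrefl := fun x => G.adj_irrefl x.val
  loop x := G.loop x.val
  mark x := G.mark x.val
  freeLoops := G.freeLoops

/-- Change the mark of the vertex `v` to `m`. -/
def setMark (G : MGraph V) (v : V) (m : Mark) : MGraph V :=
  { G with mark := fun x => if x = v then m else G.mark x }

/-- The one-vertex graph with given loop status and mark (and no free loops). -/
def single (l : Bool) (m : Mark) : MGraph Unit where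
  adj _ _ := false
  adj_symm := fun _ _ => rfl
  adj_irrefl := fun _ => rfl
  loop _ := l
  mark _ := m
  freeLoops := 0

end MGraph

section NullityHelpers

lemma rank_submatrix_le' {l m n o : Type} [Fintype l] [Fintype m] [Fintype n] [Fintype o]
    [DecidableEq m] [DecidableEq n] {R : Type*} [Field R]
    (A : Matrix m n R) (f : l → m) (g : o → n) :
    (A.submatrix f g).rank ≤ A.rank := by
  have h : A.submatrix f g =
      (Matrix.of fun i k => if f i = k then (1 : R) else 0) * A *
        (Matrix.of fun k j => if k = g j then (1 : R) else 0) := by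
    ext i j
    simp [Matrix.mul_apply, ite_mul, mul_ite, Finset.sum_ite_eq, Finset.sum_ite_eq']
  rw [h]
  exact (Matrix.rank_mul_le_left _ _).trans (Matrix.rank_mul_le_right _ _)

lemma nullity_eq_of_compat {m n : Type} [Fintype m] [Fintype n] [DecidableEq m] [DecidableEq n]
    (A : Matrix m m (ZMod 2)) (B : Matrix n n (ZMod 2)) (e : m ≃ n)
    (h : ∀ i j, A i j = B (e i) (e j)) : nullity A = nullity B := by
  have hA : A = B.submatrix e e := by ext i j; exact h i j
  rw [nullity, nullity, hA, Matrix.rank_submatrix, Fintype.card_congr e]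

lemma nullity_dup {m n : Type} [Fintype m] [Fintype n] [DecidableEq m] [DecidableEq n]
    (A : Matrix m m (ZMod 2)) (B : Matrix n n (ZMod 2)) (g : m → n) (s : n → m)
    (hgs : ∀ x, g (s x) = x) (h : ∀ i j, A i j = B (g i) (g j))
    (hcard : Fintype.card m = Fintype.card n + 1) :
    nullity A = nullity B + 1 := by
  have hA : A = B.submatrix g g := by ext i j; exact h i j
  have h1 : A.rank ≤ B.rank := by rw [hA]; exact rank_submatrix_le' B g g
  have h2 : B.rank ≤ A.rank := by
    have hB : B = A.submatrix s s := by
      ext i j; rw [hA, Matrix.submatrix_apply, Matrix.submatrix_apply, hgs, hgs]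
    conv_lhs => rw [hB]
    exact rank_submatrix_le' A s s
  have hr : A.rank = B.rank := le_antisymm h1 h2
  have hb : B.rank ≤ Fintype.card n := B.rank_le_card_height
  rw [nullity, nullity, hr, hcard]
  omega

end NullityHelpers
namespace MGraph

section Congr

variable {V₁ V₂ : Type} [DecidableEq V₁] [DecidableEq V₂]

lemma matT_entry_congr (G₁ : MGraph V₁) (G₂ : MGraph V₂) (T₁ : Finset V₁) (T₂ : Finset V₂)
    (x₁ y₁ : V₁) (x₂ y₂ : V₂)
    (heq : (x₁ = y₁) ↔ (x₂ = y₂))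
    (hl : G₂.loop x₂ = G₁.loop x₁) (hm : G₂.mark x₂ = G₁.mark x₁)
    (hmem : (x₂ ∈ T₂) ↔ (x₁ ∈ T₁))
    (hadj : x₁ ≠ y₁ → G₂.adj x₂ y₂ = G₁.adj x₁ y₁) :
    G₁.matT T₁ x₁ y₁ = G₂.matT T₂ x₂ y₂ := by
  by_cases h : x₁ = y₁
  · subst h
    obtain rfl : x₂ = y₂ := heq.1 rfl
    simp only [matT, Matrix.of_apply, eq_self_iff_true, if_true, hl, hm, hmem]
  · simp only [matT, Matrix.of_apply, if_neg h, if_neg (fun h' => h (heq.2 h')), hadj h]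

lemma keep_congr (G₁ : MGraph V₁) (G₂ : MGraph V₂) (T₁ : Finset V₁) (T₂ : Finset V₂)
    (x₁ : V₁) (x₂ : V₂)
    (hm : G₂.mark x₂ = G₁.mark x₁)
    (hdiag : G₁.matT T₁ x₁ x₁ = G₂.matT T₂ x₂ x₂) :
    G₁.keep T₁ x₁ = G₂.keep T₂ x₂ := by
  simp only [keep, hm, hdiag]

lemma matT_diag_u (G : MGraph V₁) (T : Finset V₁) (x : V₁)
    (hm : G.mark x = Mark.u) (hl : G.loop x = false) :
    G.matT T x x = if x ∈ T then 1 else 0 := by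
  simp only [matT, Matrix.of_apply, if_pos rfl, hm, hl]
  by_cases h : x ∈ T <;> simp [h, Mark.hasR]

lemma keep_u (G : MGraph V₁) (T : Finset V₁) (x : V₁)
    (hm : G.mark x = Mark.u) (hl : G.loop x = false) :
    G.keep T x = !(decide (x ∈ T)) := by
  simp only [keep, hm, matT_diag_u G T x hm hl, Mark.isC, Mark.isU]
  by_cases h : x ∈ T <;> simp [h]

lemma nullity_subMat_congr [Fintype V₁] [Fintype V₂]
    (G₁ : MGraph V₁) (G₂ : MGraph V₂) (T₁ : Finset V₁) (T₂ : Finset V₂)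
    (f : V₁ → V₂) (g : V₂ → V₁)
    (hk1 : ∀ x, G₁.keep T₁ x = true → G₂.keep T₂ (f x) = true)
    (hk2 : ∀ y, G₂.keep T₂ y = true → G₁.keep T₁ (g y) = true)
    (hgf : ∀ x, G₁.keep T₁ x = true → g (f x) = x)
    (hfg : ∀ y, G₂.keep T₂ y = true → f (g y) = y)
    (hmat : ∀ x y, G₁.keep T₁ x = true → G₁.keep T₁ y = true →
        G₁.matT T₁ x y = G₂.matT T₂ (f x) (f y)) :
    nullity (G₁.subMat T₁) = nullity (G₂.subMat T₂) := by
  refine nullity_eq_of_compat _ _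
    ⟨fun x => ⟨f x.1, hk1 _ x.2⟩, fun y => ⟨g y.1, hk2 _ y.2⟩,
      fun x => Subtype.ext (hgf _ x.2), fun y => Subtype.ext (hfg _ y.2)⟩ ?_
  intro i j
  exact hmat i.1 j.1 i.2 j.2

lemma nullity_subMat_dup [Fintype V₁] [Fintype V₂]
    (G₁ : MGraph V₁) (G₂ : MGraph V₂) (T₁ : Finset V₁) (T₂ : Finset V₂)
    (f : V₁ → V₂) (g : V₂ → V₁)
    (hk1 : ∀ x, G₁.keep T₁ x = true → G₂.keep T₂ (f x) = true)
    (hk2 : ∀ y, G₂.keep T₂ y = true → G₁.keep T₁ (g y) = true)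
    (hfg : ∀ y, G₂.keep T₂ y = true → f (g y) = y)
    (hmat : ∀ x y, G₁.keep T₁ x = true → G₁.keep T₁ y = true →
        G₁.matT T₁ x y = G₂.matT T₂ (f x) (f y))
    (hcard : Fintype.card {x // G₁.keep T₁ x = true} =
      Fintype.card {y // G₂.keep T₂ y = true} + 1) :
    nullity (G₁.subMat T₁) = nullity (G₂.subMat T₂) + 1 := by
  refine nullity_dup _ _ (fun x => ⟨f x.1, hk1 _ x.2⟩) (fun y => ⟨g y.1, hk2 _ y.2⟩)
    (fun y => Subtype.ext (hfg _ y.2)) ?_ hcard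
  intro i j
  exact hmat i.1 j.1 i.2 j.2

end Congr

end MGraph
namespace MGraph

section Twin

variable {V : Type} [DecidableEq V]

/-- The vertex map from `V` to `V − w` sending `w` to `v`. -/
def toDel (v w : V) (hvw : v ≠ w) : V → {x : V // x ≠ w} :=
  fun x => if h : x = w then ⟨v, hvw⟩ else ⟨x, h⟩

lemma toDel_ne {v w : V} (hvw : v ≠ w) {x : V} (hx : x ≠ w) :
    toDel v w hvw x = ⟨x, hx⟩ := dif_neg hx

lemma toDel_w {v w : V} (hvw : v ≠ w) : toDel v w hvw w = ⟨v, hvw⟩ := dif_pos rfl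

/-- matT congruence between `G` and `G.delete w` away from `w`. -/
lemma matT_del (G : MGraph V) (w : V) (T₁ : Finset V) (T₂ : Finset {x : V // x ≠ w}) (x y : V)
    (hx : x ≠ w) (hy : y ≠ w)
    (hmem : (⟨x, hx⟩ : {a : V // a ≠ w}) ∈ T₂ ↔ x ∈ T₁) :
    G.matT T₁ x y = (G.delete w).matT T₂ ⟨x, hx⟩ ⟨y, hy⟩ :=
  matT_entry_congr G (G.delete w) T₁ T₂ x y ⟨x, hx⟩ ⟨y, hy⟩
    (by simp [Subtype.ext_iff]) rfl rfl hmem (fun _ => rfl)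

lemma keep_del (G : MGraph V) (w : V) (T₁ : Finset V) (T₂ : Finset {x : V // x ≠ w})
    (x : V) (hx : x ≠ w)
    (hmem : (⟨x, hx⟩ : {a : V // a ≠ w}) ∈ T₂ ↔ x ∈ T₁) :
    G.keep T₁ x = (G.delete w).keep T₂ ⟨x, hx⟩ :=
  keep_congr G (G.delete w) T₁ T₂ x ⟨x, hx⟩ rfl (matT_del G w T₁ T₂ x x hx hx hmem)

/-- In the deleted graph, the entry at `(v', y)` matches the entry at `(w, y)` of `G`. -/
lemma matT_wv (G : MGraph V) (v w : V) (hvw : v ≠ w)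
    (hlv : G.loop v = false) (hlw : G.loop w = false)
    (hmv : G.mark v = Mark.u) (hmw : G.mark w = Mark.u)
    (htwin : ∀ x, x ≠ v → x ≠ w → G.adj v x = G.adj w x)
    (T₁ : Finset V) (T₂ : Finset {x : V // x ≠ w})
    (hmemw : (⟨v, hvw⟩ : {a : V // a ≠ w}) ∈ T₂ ↔ w ∈ T₁)
    (y : V) (hy : y ≠ w) (hyv : y ≠ v) :
    G.matT T₁ w y = (G.delete w).matT T₂ ⟨v, hvw⟩ ⟨y, hy⟩ :=
  matT_entry_congr G (G.delete w) T₁ T₂ w y ⟨v, hvw⟩ ⟨y, hy⟩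
    (iff_of_false (fun h => hy h.symm) (by simp only [Subtype.mk.injEq]; exact fun h => hyv h.symm))
    (hlv.trans hlw.symm) (hmv.trans hmw.symm) hmemw
    (fun _ => htwin y hyv hy)

lemma matT_vw' (G : MGraph V) (v w : V) (hvw : v ≠ w)
    (htwin : ∀ x, x ≠ v → x ≠ w → G.adj v x = G.adj w x)
    (T₁ : Finset V) (T₂ : Finset {x : V // x ≠ w})
    (y : V) (hy : y ≠ w) (hyv : y ≠ v)
    (hmem : (⟨y, hy⟩ : {a : V // a ≠ w}) ∈ T₂ ↔ y ∈ T₁) :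
    G.matT T₁ y w = (G.delete w).matT T₂ ⟨y, hy⟩ ⟨v, hvw⟩ :=
  matT_entry_congr G (G.delete w) T₁ T₂ y w ⟨y, hy⟩ ⟨v, hvw⟩
    (iff_of_false hy (by simp only [Subtype.mk.injEq]; exact hyv))
    rfl rfl hmem
    (fun _ => by
      show G.adj y v = G.adj y w
      rw [G.adj_symm y v, G.adj_symm y w, htwin y hyv hy])

lemma matT_ww (G : MGraph V) (v w : V) (hvw : v ≠ w)
    (hlv : G.loop v = false) (hlw : G.loop w = false)
    (hmv : G.mark v = Mark.u) (hmw : G.mark w = Mark.u)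
    (T₁ : Finset V) (T₂ : Finset {x : V // x ≠ w})
    (hmemw : (⟨v, hvw⟩ : {a : V // a ≠ w}) ∈ T₂ ↔ w ∈ T₁) :
    G.matT T₁ w w = (G.delete w).matT T₂ ⟨v, hvw⟩ ⟨v, hvw⟩ :=
  matT_entry_congr G (G.delete w) T₁ T₂ w w ⟨v, hvw⟩ ⟨v, hvw⟩
    (iff_of_true rfl rfl) (hlv.trans hlw.symm) (hmv.trans hmw.symm) hmemw (fun h => absurd rfl h)

lemma matT_off (G : MGraph V) (T : Finset V) (x y : V) (hxy : x ≠ y) :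
    G.matT T x y = if G.adj x y = true then 1 else 0 := by
  simp [matT, if_neg hxy]

end Twin

end MGraph
namespace MGraph

section TwinL

variable {V : Type} [DecidableEq V] [Fintype V]

/-- L2 : case `w ∈ T`, `v ∉ T`. -/
lemma nullity_insert_w (G : MGraph V) (v w : V) (hvw : v ≠ w)
    (hlw : G.loop w = false) (hmw : G.mark w = Mark.u)
    (T : Finset V) (hwT : w ∉ T) :
    nullity (G.subMat (insert w T)) =
      nullity ((G.delete w).subMat (T.subtype (· ≠ w))) := by
  have hkw : G.keep (insert w T) w = false := by
    rw [G.keep_u _ w hmw hlw]; simp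
  have hne : ∀ x, G.keep (insert w T) x = true → x ≠ w := by
    rintro x hx rfl; rw [hkw] at hx; exact absurd hx (by simp)
  have hmem : ∀ (x : V) (hx : x ≠ w),
      ((⟨x, hx⟩ : {a : V // a ≠ w}) ∈ T.subtype (· ≠ w)) ↔ x ∈ insert w T := by
    intro x hx; simp [Finset.mem_subtype, Finset.mem_insert, hx]
  refine nullity_subMat_congr G (G.delete w) _ _
    (toDel v w hvw) Subtype.val ?_ ?_ ?_ ?_ ?_
  · intro x hx
    have hxw := hne x hx
    rw [toDel_ne hvw hxw, ← keep_del G w _ _ x hxw (hmem x hxw)]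
    exact hx
  · intro y hy
    rw [keep_del G w _ _ y.1 y.2 (hmem y.1 y.2)]
    exact hy
  · intro x hx; rw [toDel_ne hvw (hne x hx)]
  · intro y _; rw [toDel_ne hvw y.2]
  · intro x y hx hy
    rw [toDel_ne hvw (hne x hx), toDel_ne hvw (hne y hy)]
    exact matT_del G w _ _ x y _ _ (hmem x (hne x hx))

/-- L4 : case `v, w ∈ T`. -/
lemma nullity_insert_vw (G : MGraph V) (v w : V) (hvw : v ≠ w)
    (hlw : G.loop w = false) (hmw : G.mark w = Mark.u)
    (T : Finset V) (hwT : w ∉ T) :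
    nullity (G.subMat (insert v (insert w T))) =
      nullity ((G.delete w).subMat (insert ⟨v, hvw⟩ (T.subtype (· ≠ w)))) := by
  have hkw : G.keep (insert v (insert w T)) w = false := by
    rw [G.keep_u _ w hmw hlw]; simp [Finset.mem_insert]
  have hne : ∀ x, G.keep (insert v (insert w T)) x = true → x ≠ w := by
    rintro x hx rfl; rw [hkw] at hx; exact absurd hx (by simp)
  have hmem : ∀ (x : V) (hx : x ≠ w),
      ((⟨x, hx⟩ : {a : V // a ≠ w}) ∈ insert ⟨v, hvw⟩ (T.subtype (· ≠ w))) ↔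
        x ∈ insert v (insert w T) := by
    intro x hx
    simp [Finset.mem_subtype, Finset.mem_insert, Subtype.ext_iff, hx]
  refine nullity_subMat_congr G (G.delete w) _ _
    (toDel v w hvw) Subtype.val ?_ ?_ ?_ ?_ ?_
  · intro x hx
    have hxw := hne x hx
    rw [toDel_ne hvw hxw, ← keep_del G w _ _ x hxw (hmem x hxw)]
    exact hx
  · intro y hy
    rw [keep_del G w _ _ y.1 y.2 (hmem y.1 y.2)]
    exact hy
  · intro x hx; rw [toDel_ne hvw (hne x hx)]
  · intro y _; rw [toDel_ne hvw y.2]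
  · intro x y hx hy
    rw [toDel_ne hvw (hne x hx), toDel_ne hvw (hne y hy)]
    exact matT_del G w _ _ x y _ _ (hmem x (hne x hx))

end TwinL

end MGraph
namespace MGraph

section TwinL2

variable {V : Type} [DecidableEq V] [Fintype V]

/-- L3 : case `v ∈ T`, `w ∉ T`. -/
lemma nullity_insert_v (G : MGraph V) (v w : V) (hvw : v ≠ w)
    (hlv : G.loop v = false) (hlw : G.loop w = false)
    (hmv : G.mark v = Mark.u) (hmw : G.mark w = Mark.u)
    (htwin : ∀ x, x ≠ v → x ≠ w → G.adj v x = G.adj w x)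
    (T : Finset V) (hvT : v ∉ T) (hwT : w ∉ T) :
    nullity (G.subMat (insert v T)) =
      nullity ((G.delete w).subMat (T.subtype (· ≠ w))) := by
  have hkv : G.keep (insert v T) v = false := by
    rw [G.keep_u _ v hmv hlv]; simp
  have hnev : ∀ x, G.keep (insert v T) x = true → x ≠ v := by
    rintro x hx rfl; rw [hkv] at hx; exact absurd hx (by simp)
  have hkw : G.keep (insert v T) w = true := by
    rw [G.keep_u _ w hmw hlw]
    simp [Finset.mem_insert, hwT, Ne.symm hvw]
  have hmem : ∀ (x : V) (hx : x ≠ w), x ≠ v →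
      (((⟨x, hx⟩ : {a : V // a ≠ w}) ∈ T.subtype (· ≠ w)) ↔ x ∈ insert v T) := by
    intro x hx hxv; simp [Finset.mem_subtype, Finset.mem_insert, hxv]
  have hmemw : ((⟨v, hvw⟩ : {a : V // a ≠ w}) ∈ T.subtype (· ≠ w)) ↔ w ∈ insert v T := by
    simp [Finset.mem_subtype, Finset.mem_insert, hvT, hwT, Ne.symm hvw]
  refine nullity_subMat_congr G (G.delete w) _ _ (toDel v w hvw)
    (fun y => if y.1 = v then w else y.1) ?_ ?_ ?_ ?_ ?_
  · intro x hx
    by_cases hxw : x = w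
    · rw [hxw, toDel_w hvw, (G.delete w).keep_u _ ⟨v, hvw⟩ hmv hlv]
      simp [Finset.mem_subtype, hvT]
    · rw [toDel_ne hvw hxw, ← keep_del G w _ _ x hxw (hmem x hxw (hnev x hx))]
      exact hx
  · intro y hy
    by_cases hyv : y.1 = v
    · simp only [if_pos hyv]; exact hkw
    · simp only [if_neg hyv]
      rw [keep_del G w _ _ y.1 y.2 (hmem y.1 y.2 hyv)]
      exact hy
  · intro x hx
    by_cases hxw : x = w
    · rw [hxw, toDel_w hvw]; simp [Ne.symm hvw]
    · rw [toDel_ne hvw hxw]; simp [hnev x hx]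
  · intro y hy
    by_cases hyv : y.1 = v
    · simp only [if_pos hyv]; rw [toDel_w hvw]; exact Subtype.ext hyv.symm
    · simp only [if_neg hyv]; rw [toDel_ne hvw y.2]
  · intro x y hx hy
    have hxv := hnev x hx
    have hyv := hnev y hy
    by_cases hxw : x = w <;> by_cases hyw : y = w
    · rw [hxw, hyw, toDel_w hvw]
      exact matT_ww G v w hvw hlv hlw hmv hmw _ _ hmemw
    · rw [hxw, toDel_w hvw, toDel_ne hvw hyw]
      exact matT_wv G v w hvw hlv hlw hmv hmw htwin _ _ hmemw y hyw hyv
    · rw [hyw, toDel_ne hvw hxw, toDel_w hvw]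
      exact matT_vw' G v w hvw htwin _ _ x hxw hxv (hmem x hxw hxv)
    · rw [toDel_ne hvw hxw, toDel_ne hvw hyw]
      exact matT_del G w _ _ x y _ _ (hmem x hxw hxv)

/-- L1 : case `v, w ∉ T`. -/
lemma nullity_base (G : MGraph V) (v w : V) (hvw : v ≠ w) (hadj : G.adj v w = false)
    (hlv : G.loop v = false) (hlw : G.loop w = false)
    (hmv : G.mark v = Mark.u) (hmw : G.mark w = Mark.u)
    (htwin : ∀ x, x ≠ v → x ≠ w → G.adj v x = G.adj w x)
    (T : Finset V) (hvT : v ∉ T) (hwT : w ∉ T) :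
    nullity (G.subMat T) =
      nullity ((G.delete w).subMat (T.subtype (· ≠ w))) + 1 := by
  have hkw : G.keep T w = true := by rw [G.keep_u _ w hmw hlw]; simp [hwT]
  have hmem : ∀ (x : V) (hx : x ≠ w),
      ((⟨x, hx⟩ : {a : V // a ≠ w}) ∈ T.subtype (· ≠ w)) ↔ x ∈ T := by
    intro x hx; simp [Finset.mem_subtype]
  have hmemw : ((⟨v, hvw⟩ : {a : V // a ≠ w}) ∈ T.subtype (· ≠ w)) ↔ w ∈ T := by
    simp [Finset.mem_subtype, hvT, hwT]
  have hkeep : ∀ (x : V) (hx : x ≠ w),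
      G.keep T x = (G.delete w).keep (T.subtype (· ≠ w)) ⟨x, hx⟩ :=
    fun x hx => keep_del G w _ _ x hx (hmem x hx)
  have hawv : G.adj w v = false := (G.adj_symm w v).trans hadj
  have hdiag : (G.delete w).matT (T.subtype (· ≠ w)) ⟨v, hvw⟩ ⟨v, hvw⟩ = 0 := by
    rw [matT_diag_u (G.delete w) _ ⟨v, hvw⟩ hmv hlv]
    simp [Finset.mem_subtype, hvT]
  refine nullity_subMat_dup G (G.delete w) _ _ (toDel v w hvw) Subtype.val ?_ ?_ ?_ ?_ ?_
  · intro x hx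
    by_cases hxw : x = w
    · rw [hxw, toDel_w hvw, ← hkeep v hvw, G.keep_u _ v hmv hlv]
      simp [hvT]
    · rw [toDel_ne hvw hxw, ← hkeep x hxw]; exact hx
  · intro y hy; rw [hkeep y.1 y.2]; exact hy
  · intro y _; rw [toDel_ne hvw y.2]
  · intro x y hx hy
    by_cases hxw : x = w <;> by_cases hyw : y = w
    · rw [hxw, hyw, toDel_w hvw]
      exact matT_ww G v w hvw hlv hlw hmv hmw _ _ hmemw
    · rw [hxw, toDel_w hvw, toDel_ne hvw hyw]
      by_cases hyv : y = v
      · rw [matT_off G T w y (by rw [hyv]; exact fun h => hvw h.symm),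
          show G.adj w y = false from by rw [hyv]; exact hawv,
          show (⟨y, hyw⟩ : {a : V // a ≠ w}) = ⟨v, hvw⟩ from Subtype.ext hyv, hdiag]
        simp
      · exact matT_wv G v w hvw hlv hlw hmv hmw htwin _ _ hmemw y hyw hyv
    · rw [hyw, toDel_ne hvw hxw, toDel_w hvw]
      by_cases hxv : x = v
      · rw [matT_off G T x w (by rw [hxv]; exact hvw),
          show G.adj x w = false from by rw [hxv]; exact hadj,
          show (⟨x, hxw⟩ : {a : V // a ≠ w}) = ⟨v, hvw⟩ from Subtype.ext hxv, hdiag]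
        simp
      · exact matT_vw' G v w hvw htwin _ _ x hxw hxv (hmem x hxw)
    · rw [toDel_ne hvw hxw, toDel_ne hvw hyw]
      exact matT_del G w _ _ x y _ _ (hmem x hxw)
  · have e : {x // G.keep T x = true} ≃
        Option {y // (G.delete w).keep (T.subtype (· ≠ w)) y = true} :=
      { toFun := fun x => if h : x.1 = w then none
          else some ⟨⟨x.1, h⟩, by rw [← hkeep x.1 h]; exact x.2⟩
        invFun := fun o => o.elim ⟨w, hkw⟩
          (fun y => ⟨y.1.1, by rw [hkeep y.1.1 y.1.2]; exact y.2⟩)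
        left_inv := by
          intro x
          by_cases h : x.1 = w
          · simp only [dif_pos h, Option.elim]; exact Subtype.ext h.symm
          · simp only [dif_neg h, Option.elim]
        right_inv := by
          rintro (_ | y)
          · simp only [Option.elim, dif_pos]; exact dif_pos rfl
          · simp only [Option.elim, dif_neg y.1.2]; exact dif_neg y.1.2 }
    rw [Fintype.card_congr e, Fintype.card_option]

end TwinL2

end MGraph
section SumHelpers

variable {V : Type} [DecidableEq V]

lemma prod_subtype_val {M : Type*} [CommMonoid M] (w : V) (s : Finset V)
    (hs : ∀ x ∈ s, x ≠ w) (h : V → M) :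
    ∏ y ∈ s.subtype (· ≠ w), h y.1 = ∏ x ∈ s, h x := by
  have := Finset.prod_map (s.subtype (· ≠ w)) (Function.Embedding.subtype (· ≠ w)) h
  rw [Finset.subtype_map_of_mem hs] at this
  exact this.symm

lemma sum_powerset_subtype {M : Type*} [AddCommMonoid M] (w : V) (u : Finset V)
    (hu : ∀ x ∈ u, x ≠ w) (F : Finset {x : V // x ≠ w} → M) :
    ∑ T' ∈ (u.subtype (· ≠ w)).powerset, F T' =
      ∑ T ∈ u.powerset, F (T.subtype (· ≠ w)) := by
  refine Finset.sum_bij' (fun T' _ => T'.map (Function.Embedding.subtype (· ≠ w)))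
    (fun T _ => T.subtype (· ≠ w)) ?_ ?_ ?_ ?_ ?_
  · intro T' hT'
    rw [Finset.mem_powerset] at hT' ⊢
    intro x hx
    rw [Finset.mem_map] at hx
    obtain ⟨y, hy, rfl⟩ := hx
    have := hT' hy
    rw [Finset.mem_subtype] at this
    exact this
  · intro T hT
    rw [Finset.mem_powerset] at hT ⊢
    intro y hy
    rw [Finset.mem_subtype] at hy ⊢
    exact hT hy
  · intro T' hT'
    ext y
    rw [Finset.mem_subtype, Finset.mem_map]
    constructor
    · rintro ⟨a, ha, h⟩
      have hay : a = y := Subtype.ext h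
      rwa [← hay]
    · intro hy
      exact ⟨y, hy, rfl⟩
  · intro T hT
    rw [Finset.mem_powerset] at hT
    exact Finset.subtype_map_of_mem (fun x hx => hu x (hT hx))
  · intro T' hT'
    congr 1
    ext y
    rw [Finset.mem_subtype, Finset.mem_map]
    constructor
    · intro hy
      exact ⟨y, hy, rfl⟩
    · rintro ⟨a, ha, h⟩
      have hay : a = y := Subtype.ext h
      rwa [← hay]

end SumHelpers
/-- let `v ≠ w` be nonadjacent, unlooped twin vertices of a
weighted marked graph `G`, both marked `u`.  Then `[G] = [(G−w)']`, where
`(G−w)'` is `G−w` with the weights of `v` changed to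
`α'(v) = α(v)α(w)d + α(v)β(w) + β(v)α(w)` and `β'(v) = β(v)β(w)`. -/
theorem wbracket_twin_uu {V : Type} [DecidableEq V] [Fintype V]
    (G : MGraph V) (v w : V) (hvw : v ≠ w)
    (hadj : G.adj v w = false)
    (hlv : G.loop v = false) (hlw : G.loop w = false)
    (hmv : G.mark v = Mark.u) (hmw : G.mark w = Mark.u)
    (htwin : ∀ x, x ≠ v → x ≠ w → G.adj v x = G.adj w x)
    {R : Type*} [CommRing R] (d : R) (α β : V → R) :
    G.wbracket d α β =
      (G.delete w).wbracket d
        (fun x => if x.val = v then α v * α w * d + α v * β w + β v * α w else α x.val)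
        (fun x => if x.val = v then β v * β w else β x.val) := by
  classical
  have hwv : w ≠ v := fun h => hvw h.symm
  unfold MGraph.wbracket
  congr 1
  -- set up the ground sets
  have hwu : w ∉ (Finset.univ : Finset V) \ {v, w} := by simp
  have hvu : v ∉ insert w ((Finset.univ : Finset V) \ {v, w}) := by
    simp [Finset.mem_insert, hvw]
  have huniv : (Finset.univ : Finset V) = insert v (insert w (Finset.univ \ {v, w})) := by
    ext x
    by_cases hxv : x = v
    · simp [hxv]
    · by_cases hxw : x = w
      · simp [hxw]
      · simp [hxv, hxw]
  have hu' : ∀ x ∈ (Finset.univ : Finset V) \ {v, w}, x ≠ w := by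
    intro x hx
    simp only [Finset.mem_sdiff, Finset.mem_insert, Finset.mem_singleton] at hx
    exact fun h => hx.2 (Or.inr h)
  have hv'u : (⟨v, hvw⟩ : {x : V // x ≠ w}) ∉
      ((Finset.univ : Finset V) \ {v, w}).subtype (· ≠ w) := by
    simp [Finset.mem_subtype]
  have huniv' : (Finset.univ : Finset {x : V // x ≠ w}) =
      insert ⟨v, hvw⟩ (((Finset.univ : Finset V) \ {v, w}).subtype (· ≠ w)) := by
    ext y
    obtain ⟨x, hx⟩ := y
    simp only [Finset.mem_univ, true_iff, Finset.mem_insert, Finset.mem_subtype,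
      Finset.mem_sdiff, Finset.mem_singleton, Subtype.ext_iff]
    by_cases hxv : x = v
    · exact Or.inl hxv
    · exact Or.inr (by simp [hxv, hx])
  rw [← Finset.powerset_univ, huniv,
    Finset.sum_powerset_insert hvu, Finset.sum_powerset_insert hwu,
    Finset.sum_powerset_insert hwu]
  rw [← @Finset.powerset_univ {x : V // x ≠ w} _, huniv',
    Finset.sum_powerset_insert hv'u]
  rw [← Finset.sum_add_distrib, ← Finset.sum_add_distrib, ← Finset.sum_add_distrib,
    ← Finset.sum_add_distrib]
  rw [sum_powerset_subtype w (Finset.univ \ {v, w}) hu']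
  refine Finset.sum_congr rfl ?_
  intro T hT
  beta_reduce
  rw [Finset.mem_powerset] at hT
  have hvT : v ∉ T := fun h => by simpa using (hT h)
  have hwT : w ∉ T := fun h => by simpa using (hT h)
  have hTw : ∀ x ∈ T, x ≠ w := fun x hx h => hwT (h ▸ hx)
  -- complement identities
  have hca : Tᶜ = insert v (insert w (Tᶜ \ {v, w})) := by
    ext x
    by_cases hxv : x = v
    · simp [hxv, hvT]
    · by_cases hxw : x = w
      · simp [hxw, hwT, hwv]
      · simp [hxv, hxw]
  have hcb : (insert w T)ᶜ = insert v (Tᶜ \ {v, w}) := by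
    ext x
    by_cases hxv : x = v
    · simp only [hxv, Finset.mem_compl, Finset.mem_insert, Finset.mem_sdiff,
        Finset.mem_singleton]
      simp [hvT]
      exact hvw
    · by_cases hxw : x = w
      · simp [hxw, hwv]
      · simp [hxv, hxw]
  have hcc : (insert v T)ᶜ = insert w (Tᶜ \ {v, w}) := by
    ext x
    by_cases hxv : x = v
    · simp [hxv]
      exact hvw
    · by_cases hxw : x = w
      · simp [hxw, hwT, hwv]
      · simp [hxv, hxw]
  have hcd : (insert v (insert w T))ᶜ = Tᶜ \ {v, w} := by
    ext x
    by_cases hxv : x = v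
    · simp [hxv]
    · by_cases hxw : x = w
      · simp [hxw, hwv]
      · simp [hxv, hxw]
  have hwC : w ∉ Tᶜ \ {v, w} := by simp
  have hvC : v ∉ Tᶜ \ {v, w} := by simp
  have hvwC : v ∉ insert w (Tᶜ \ {v, w}) := by simp [Finset.mem_insert, hvw]
  have hCw : ∀ x ∈ Tᶜ \ {v, w}, x ≠ w := by
    intro x hx
    simp only [Finset.mem_sdiff, Finset.mem_insert, Finset.mem_singleton] at hx
    exact fun h => hx.2 (Or.inr h)
  have hCv : ∀ x ∈ Tᶜ \ {v, w}, x ≠ v := by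
    intro x hx
    simp only [Finset.mem_sdiff, Finset.mem_insert, Finset.mem_singleton] at hx
    exact fun h => hx.2 (Or.inl h)
  have hvwT : v ∉ insert w T := by simp [Finset.mem_insert, hvw, hvT]
  -- subtype-side identities
  have hv'T' : (⟨v, hvw⟩ : {x : V // x ≠ w}) ∉ T.subtype (· ≠ w) := by
    simp [Finset.mem_subtype, hvT]
  have hv'D' : (⟨v, hvw⟩ : {x : V // x ≠ w}) ∉ (Tᶜ \ {v, w}).subtype (· ≠ w) := by
    simp [Finset.mem_subtype]
  have he1 : (T.subtype (· ≠ w))ᶜ = insert ⟨v, hvw⟩ ((Tᶜ \ {v, w}).subtype (· ≠ w)) := by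
    ext y
    obtain ⟨x, hx⟩ := y
    simp only [Finset.mem_compl, Finset.mem_subtype, Finset.mem_insert, Subtype.ext_iff,
      Finset.mem_sdiff, Finset.mem_singleton]
    by_cases hxv : x = v
    · simp [hxv, hvT]
    · simp [hxv, hx]
  have he2 : (insert ⟨v, hvw⟩ (T.subtype (· ≠ w)))ᶜ = (Tᶜ \ {v, w}).subtype (· ≠ w) := by
    ext y
    obtain ⟨x, hx⟩ := y
    simp only [Finset.mem_compl, Finset.mem_subtype, Finset.mem_insert, Subtype.ext_iff,
      Finset.mem_sdiff, Finset.mem_singleton]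
    by_cases hxv : x = v
    · simp [hxv, hvT]
    · simp [hxv, hx]
  -- product computations on the subtype side
  have hprodD : (∏ y ∈ (Tᶜ \ {v, w}).subtype (· ≠ w),
      (if (y : {x : V // x ≠ w}).val = v then α v * α w * d + α v * β w + β v * α w
        else α y.val)) = ∏ x ∈ Tᶜ \ {v, w}, α x := by
    rw [Finset.prod_congr rfl (fun y hy => if_neg ?_)]
    · exact prod_subtype_val w _ hCw α
    · intro h
      exact hCv y.1 (by simpa [Finset.mem_subtype] using hy) h
  have hprodT : (∏ y ∈ T.subtype (· ≠ w),
      (if (y : {x : V // x ≠ w}).val = v then β v * β w else β y.val)) = ∏ x ∈ T, β x := by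
    rw [Finset.prod_congr rfl (fun y hy => if_neg ?_)]
    · exact prod_subtype_val w _ hTw β
    · intro h
      exact hvT (by simpa [Finset.mem_subtype, h] using hy)
  -- nullity identities
  have hN1 := MGraph.nullity_base G v w hvw hadj hlv hlw hmv hmw htwin T hvT hwT
  have hN2 := MGraph.nullity_insert_w G v w hvw hlw hmw T hwT
  have hN3 := MGraph.nullity_insert_v G v w hvw hlv hlw hmv hmw htwin T hvT hwT
  have hN4 := MGraph.nullity_insert_vw G v w hvw hlw hmw T hwT
  rw [hca, hcb, hcc, hcd, he1, he2, hN1, hN2, hN3, hN4,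
    Finset.prod_insert hvwC, Finset.prod_insert hwC, Finset.prod_insert hvC,
    Finset.prod_insert hwT, Finset.prod_insert hvT, Finset.prod_insert hvwT,
    Finset.prod_insert hwT, Finset.prod_insert hv'D', Finset.prod_insert hv'T']
  rw [show (if (⟨v, hvw⟩ : {x : V // x ≠ w}).val = v
        then α v * α w * d + α v * β w + β v * α w else α (⟨v, hvw⟩ : {x : V // x ≠ w}).val)
      = α v * α w * d + α v * β w + β v * α w from if_pos rfl,
    show (if (⟨v, hvw⟩ : {x : V // x ≠ w}).val = v then β v * β w
        else β (⟨v, hvw⟩ : {x : V // x ≠ w}).val) = β v * β w from if_pos rfl]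
  rw [hprodD, hprodT, pow_succ]
  ring
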